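/- For every k ≥ 0: Σ_{n=0}^{k} (−1)^n · v^{−n(n+3)/2} · {k+n}_{2n}/{n}! = v^{−2k(k+1)}, where {i} = v^i − v^{−i}, {a}_{2n} = {a}{a−1}⋯{a−2n+1}, {n}! = {n}⋯{1}. -/

import Mathlib

/-- `v`, an indeterminate, as an element of the field `ℚ(v)` of rational functions. -/
noncomputable def vv : RatFunc ℚ := RatFunc.X

/-- The balanced `q`-integer `{m} = v^m - v^{-m}`. -/
noncomputable def bk (m : ℤ) : RatFunc ℚ := vv ^ m - vv ^ (-m)

/-- The falling product `{a}_i = {a}{a-1}⋯{a-i+1}`. -/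
noncomputable def bkp (a : ℤ) (i : ℕ) : RatFunc ℚ := ∏ j ∈ Finset.range i, bk (a - j)

/-- The balanced factorial `{n}! = {n}{n-1}⋯{1}`. -/
noncomputable def bfact (n : ℕ) : RatFunc ℚ := bkp n n

/-- The balanced binomial coefficient `[a choose b] = {a}_b / {b}!`. -/
noncomputable def bbinom (a : ℤ) (b : ℕ) : RatFunc ℚ := bkp a b / bfact b

/-- Chebyshev-type polynomials `V_0 = 1`, `V_1 = x`, `V_n = x V_{n-1} - V_{n-2}`. -/
noncomputable def chebV : ℕ → Polynomial (RatFunc ℚ)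
  | 0 => 1
  | 1 => Polynomial.X
  | (n + 2) => Polynomial.X * chebV (n + 1) - chebV n

/-- `P_n = ∏_{i=0}^{n-1} (x - v^{2i+1} - v^{-2i-1})`. -/
noncomputable def PP (n : ℕ) : Polynomial (RatFunc ℚ) :=
  ∏ i ∈ Finset.range n,
    (Polynomial.X - Polynomial.C (vv ^ (2 * i + 1) + vv ^ (-(2 * (i : ℤ) + 1))))


lemma vv_ne_zero : vv ≠ 0 := RatFunc.X_ne_zero

lemma bk_pos_ne_zero {m : ℤ} (hm : 0 < m) : bk m ≠ 0 := by
  intro h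
  have h1 : vv ^ m = vv ^ (-m) := sub_eq_zero.mp h
  have h2 : vv ^ (2 * m) = 1 := by
    have := congrArg (· * vv ^ m) h1
    rw [← zpow_add₀ vv_ne_zero, ← zpow_add₀ vv_ne_zero] at this
    simpa [two_mul] using this
  set j : ℕ := (2*m).toNat with hj
  have hjm : (j : ℤ) = 2 * m := Int.toNat_of_nonneg (by omega)
  have h3 : (vv : RatFunc ℚ) ^ j = 1 := by rw [← zpow_natCast, hjm]; exact h2
  have h4 : (Polynomial.X : Polynomial ℚ) ^ j = 1 := by
    apply RatFunc.algebraMap_injective ℚ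
    rw [map_pow, map_one, RatFunc.algebraMap_X]
    exact h3
  have h5 : j = 0 := by
    have := congrArg Polynomial.natDegree h4
    simpa using this
  omega

lemma bfact_ne_zero (n : ℕ) : bfact n ≠ 0 := by
  unfold bfact bkp
  apply Finset.prod_ne_zero_iff.mpr
  intro j hj
  simp only [Finset.mem_range] at hj
  exact bk_pos_ne_zero (by omega)

lemma bkp_succ (a : ℤ) (i : ℕ) : bkp a (i+1) = bkp a i * bk (a - i) :=
  Finset.prod_range_succ _ _

lemma bkp_succ' (a : ℤ) (i : ℕ) : bkp (a+1) (i+1) = bkp a i * bk (a+1) := by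
  unfold bkp
  rw [Finset.prod_range_succ']
  congr 1
  · apply Finset.prod_congr rfl; intro j _; congr 1; push_cast; ring
  · congr 1; push_cast; ring

lemma bk_AB (k n : ℕ) : bk ((k:ℤ)+n+2) = vv^(k+1)*vv^(n+1) - (vv^(k+1)*vv^(n+1))⁻¹ := by
  have h : vv ^ ((k:ℤ)+n+2) = vv^(k+1)*vv^(n+1) := by
    have e : (k:ℤ)+n+2 = ((k+1:ℕ):ℤ) + ((n+1:ℕ):ℤ) := by push_cast; ring
    rw [e, zpow_add₀ vv_ne_zero, zpow_natCast, zpow_natCast]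
  rw [bk, zpow_neg, h]

lemma bk_ABi (k n : ℕ) : bk ((k:ℤ)-n) = vv^(k+1)*(vv^(n+1))⁻¹ - (vv^(k+1)*(vv^(n+1))⁻¹)⁻¹ := by
  have h : vv ^ ((k:ℤ)-n) = vv^(k+1)*(vv^(n+1))⁻¹ := by
    have e : (k:ℤ)-n = ((k+1:ℕ):ℤ) - ((n+1:ℕ):ℤ) := by push_cast; ring
    rw [e, zpow_sub₀ vv_ne_zero, zpow_natCast, zpow_natCast, div_eq_mul_inv]
  rw [bk, zpow_neg, h]

lemma bk_B (n : ℕ) : bk ((n:ℤ)+1) = vv^(n+1) - (vv^(n+1))⁻¹ := by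
  have h : vv ^ ((n:ℤ)+1) = vv^(n+1) := by
    rw [show (n:ℤ)+1 = ((n+1:ℕ):ℤ) by push_cast; ring, zpow_natCast]
  rw [bk, zpow_neg, h]

lemma e1 (n : ℕ) : (n+1)*(n+1+3)/2 = n*(n+1)/2 + (2*n+2) := by
  obtain ⟨m, hm⟩ := Nat.even_mul_succ_self n
  have h2 : (n+1)*(n+1+3) = (m+m) + (4*n+4) := by rw [← hm]; ring
  omega

lemma e2 (n : ℕ) : (n+1)*(n+1+1)/2 = n*(n+1)/2 + (n+1) := by
  obtain ⟨m, hm⟩ := Nat.even_mul_succ_self n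
  have h2 : (n+1)*(n+1+1) = (m+m) + (2*n+2) := by rw [← hm]; ring
  omega

noncomputable def TT (k n : ℕ) : RatFunc ℚ :=
  (-1 : RatFunc ℚ) ^ n * (vv ^ (n * (n + 3) / 2))⁻¹ * (bkp ((k : ℤ) + n) (2 * n) / bfact n)

noncomputable def GG (k : ℕ) : ℕ → RatFunc ℚ
  | 0 => 0
  | (n+1) => (-1 : RatFunc ℚ) ^ n * (vv ^ (k+1) + (vv ^ (k+1))⁻¹) * vv ^ (2*(k+1))
      * (vv ^ (n*(n+1)/2))⁻¹ * (bkp ((k:ℤ) + n + 1) (2*n+1) / bfact n)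

lemma key (k n : ℕ) :
    vv ^ (4*(k+1)) * TT (k+1) n - TT k n = GG k (n+1) - GG k n := by
  have hv := vv_ne_zero
  cases n with
  | zero =>
      simp only [TT, GG, bkp, bfact, Finset.range_zero, Finset.range_one,
        Finset.prod_empty, Finset.prod_singleton]
      norm_num
      rw [bk_B k, show 4*(k+1) = (k+1)*4 by ring, show 2*(k+1) = (k+1)*2 by ring,
        pow_mul, pow_mul]
      have hx : (vv:RatFunc ℚ) ^ (k+1) ≠ 0 := pow_ne_zero _ hv
      field_simp
      ring
  | succ n =>
      simp only [TT, GG]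
      have hP1 : bkp ((↑(k + 1):ℤ) + ↑(n + 1)) (2 * (n + 1)) =
          bkp ((k:ℤ)+n+1) (2*n+1) * (vv^(k+1)*vv^(n+1) - (vv^(k+1)*vv^(n+1))⁻¹) := by
        rw [show ((k+1:ℕ):ℤ) + ((n+1:ℕ):ℤ) = ((k:ℤ)+n+1)+1 by push_cast; ring,
          show 2*(n+1) = 2*n+1+1 by ring, bkp_succ',
          show (k:ℤ)+n+1+1 = (k:ℤ)+n+2 by ring, bk_AB]
      have hP2 : bkp ((↑k:ℤ) + ↑(n + 1)) (2 * (n + 1)) =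
          bkp ((k:ℤ)+n+1) (2*n+1) * (vv^(k+1)*(vv^(n+1))⁻¹ - (vv^(k+1)*(vv^(n+1))⁻¹)⁻¹) := by
        rw [show (k:ℤ) + ((n+1:ℕ):ℤ) = (k:ℤ)+n+1 by push_cast; ring,
          show 2*(n+1) = 2*n+1+1 by ring, bkp_succ,
          show (k:ℤ)+n+1-((2*n+1:ℕ):ℤ) = (k:ℤ)-n by push_cast; ring, bk_ABi]
      have hP3 : bkp ((↑k:ℤ) + ↑(n + 1) + 1) (2 * (n + 1) + 1) =
          bkp ((k:ℤ)+n+1) (2*n+1) * (vv^(k+1)*(vv^(n+1))⁻¹ - (vv^(k+1)*(vv^(n+1))⁻¹)⁻¹)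
            * (vv^(k+1)*vv^(n+1) - (vv^(k+1)*vv^(n+1))⁻¹) := by
        rw [show (k:ℤ) + ((n+1:ℕ):ℤ) + 1 = ((k:ℤ)+n+1)+1 by push_cast; ring,
          show 2*(n+1)+1 = (2*n+1+1)+1 by ring, bkp_succ', bkp_succ,
          show (k:ℤ)+n+1-((2*n+1:ℕ):ℤ) = (k:ℤ)-n by push_cast; ring, bk_ABi,
          show (k:ℤ)+n+1+1 = (k:ℤ)+n+2 by ring, bk_AB]
      have hF : bfact (n+1) = bfact n * (vv^(n+1) - (vv^(n+1))⁻¹) := by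
        show bkp (↑(n+1)) (n+1) = _
        rw [show ((n+1:ℕ):ℤ) = (n:ℤ)+1 by push_cast; ring, bkp_succ', bk_B]
        rfl
      rw [hP1, hP2, hP3, hF, e1 n, e2 n,
        pow_add vv (n*(n+1)/2) (2*n+2), pow_add vv (n*(n+1)/2) (n+1),
        show 2*n+2 = (n+1)*2 by ring, pow_mul vv (n+1) 2,
        show 4*(k+1) = (k+1)*4 by ring, pow_mul vv (k+1) 4,
        show 2*(k+1) = (k+1)*2 by ring, pow_mul vv (k+1) 2,
        pow_succ (-1 : RatFunc ℚ) n]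
      have hBB0 : (vv:RatFunc ℚ)^(n+1) - ((vv:RatFunc ℚ)^(n+1))⁻¹ ≠ 0 := by
        rw [← bk_B n]; exact bk_pos_ne_zero (by omega)
      set A := (vv:RatFunc ℚ) ^ (k+1) with hAd
      set B := (vv:RatFunc ℚ) ^ (n+1) with hBd
      set D := (vv:RatFunc ℚ) ^ (n*(n+1)/2) with hDd
      set P := bkp ((k:ℤ)+n+1) (2*n+1) with hPd
      set Q := bfact n with hQd
      set E := (-1 : RatFunc ℚ) ^ n with hEd
      have hA : A ≠ 0 := pow_ne_zero _ hv
      have hB : B ≠ 0 := pow_ne_zero _ hv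
      have hD : D ≠ 0 := pow_ne_zero _ hv
      have hQ : Q ≠ 0 := bfact_ne_zero n
      have hBB : B - B⁻¹ ≠ 0 := hBB0
      clear_value A B D P Q E
      have hB2 : B^2 - 1 ≠ 0 := by
        intro h
        apply hBB
        have hrw : B - B⁻¹ = (B^2 - 1)/B := by field_simp
        rw [hrw, h, zero_div]
      have r1 : A*B - (A*B)⁻¹ = (A^2*B^2 - 1)/(A*B) := by field_simp
      have r2 : A*B⁻¹ - (A*B⁻¹)⁻¹ = (A^2 - B^2)/(A*B) := by field_simp
      have r3 : B - B⁻¹ = (B^2-1)/B := by field_simp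
      have r4 : A + A⁻¹ = (A^2+1)/A := by field_simp
      rw [r1, r2, r3, r4]
      have hW : A^3*B^4*D*Q*(B^2-1) ≠ 0 := by
        apply mul_ne_zero; apply mul_ne_zero; apply mul_ne_zero; apply mul_ne_zero
        · exact pow_ne_zero _ hA
        · exact pow_ne_zero _ hB
        · exact hD
        · exact hQ
        · exact hB2
      have t1 : E * -1 * (D * B ^ 2)⁻¹ * (P * ((A ^ 2 * B ^ 2 - 1) / (A * B)) / (Q * ((B ^ 2 - 1) / B))) =
          (-(E*P*(A^2*B^2-1)*A^2*B^2)) / (A^3*B^4*D*Q*(B^2-1)) := by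
        rw [eq_div_iff hW]; field_simp
      have t2 : E * -1 * (D * B ^ 2)⁻¹ * (P * ((A ^ 2 - B ^ 2) / (A * B)) / (Q * ((B ^ 2 - 1) / B))) =
          (-(E*P*(A^2-B^2)*A^2*B^2)) / (A^3*B^4*D*Q*(B^2-1)) := by
        rw [eq_div_iff hW]; field_simp
      have t3 : E * -1 * ((A ^ 2 + 1) / A) * A ^ 2 * (D * B)⁻¹ *
          (P * ((A ^ 2 - B ^ 2) / (A * B)) * ((A ^ 2 * B ^ 2 - 1) / (A * B)) / (Q * ((B ^ 2 - 1) / B))) =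
          (-(E*P*(A^2+1)*(A^2-B^2)*(A^2*B^2-1)*A^2*B^2)) / (A^3*B^4*D*Q*(B^2-1)) := by
        have m1 : P * ((A ^ 2 - B ^ 2) / (A * B)) * ((A ^ 2 * B ^ 2 - 1) / (A * B)) =
            P * ((A^2-B^2) * (A^2*B^2-1)) / (A^2*B^2) := by
          field_simp
        rw [m1, eq_div_iff hW]; field_simp
      have t4 : E * ((A ^ 2 + 1) / A) * A ^ 2 * D⁻¹ * (P / Q) =
          (E*P*(A^2+1)*A^4*B^4*(B^2-1)) / (A^3*B^4*D*Q*(B^2-1)) := by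
        rw [eq_div_iff hW]; field_simp
      rw [t1, t2, t3, t4, show A ^ 4 * ((-(E*P*(A^2*B^2-1)*A^2*B^2)) / (A^3*B^4*D*Q*(B^2-1)))
          = (A ^ 4 * (-(E*P*(A^2*B^2-1)*A^2*B^2))) / (A^3*B^4*D*Q*(B^2-1)) from
          (mul_div_assoc _ _ _).symm, div_sub_div_same, div_sub_div_same]
      congr 1
      ring

lemma GG_zero (k : ℕ) : GG k 0 = 0 := rfl

lemma TT_top (k : ℕ) : TT k (k+1) = 0 := by
  unfold TT
  have h : bkp ((k:ℤ) + ↑(k+1)) (2*(k+1)) = 0 := by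
    unfold bkp
    apply Finset.prod_eq_zero (i := 2*k+1)
    · simp only [Finset.mem_range]; omega
    · have e : (k:ℤ) + ↑(k+1) - ↑(2*k+1) = 0 := by push_cast; ring
      rw [e]; simp [bk]
  rw [h]; simp

lemma GG_top (k : ℕ) : GG k (k+1+1) = 0 := by
  show (-1 : RatFunc ℚ) ^ (k+1) * (vv ^ (k+1) + (vv ^ (k+1))⁻¹) * vv ^ (2*(k+1))
      * (vv ^ ((k+1)*((k+1)+1)/2))⁻¹ * (bkp ((k:ℤ) + ↑(k+1) + 1) (2*(k+1)+1) / bfact (k+1)) = 0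
  have h : bkp ((k:ℤ) + ↑(k+1) + 1) (2*(k+1)+1) = 0 := by
    unfold bkp
    apply Finset.prod_eq_zero (i := 2*k+2)
    · simp only [Finset.mem_range]; omega
    · have e : (k:ℤ) + ↑(k+1) + 1 - ↑(2*k+2) = 0 := by push_cast; ring
      rw [e]; simp [bk]
  rw [h]; simp

lemma step (k : ℕ) :
    ∑ n ∈ Finset.range (k+1+1), TT (k+1) n
      = (vv ^ (4*(k+1)))⁻¹ * ∑ n ∈ Finset.range (k+1), TT k n := by
  have h1 : ∑ n ∈ Finset.range (k+1+1), (vv ^ (4*(k+1)) * TT (k+1) n - TT k n)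
      = GG k (k+1+1) - GG k 0 := by
    simp only [key]
    exact Finset.sum_range_sub (GG k) (k+1+1)
  rw [GG_top, GG_zero, sub_zero, Finset.sum_sub_distrib, ← Finset.mul_sum,
    Finset.sum_range_succ (fun n => TT k n) (k+1), TT_top, add_zero, sub_eq_zero] at h1
  have he : (vv : RatFunc ℚ) ^ (4*(k+1)) ≠ 0 := pow_ne_zero _ vv_ne_zero
  rw [← h1, ← mul_assoc, inv_mul_cancel₀ he, one_mul]

lemma main (k : ℕ) :
    ∑ n ∈ Finset.range (k+1), TT k n = (vv ^ (2*k*(k+1)))⁻¹ := by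
  induction k with
  | zero => norm_num [TT, bfact, bkp]
  | succ m ih =>
      rw [step m, ih, ← mul_inv, ← pow_add,
        show 4*(m+1) + 2*m*(m+1) = 2*(m+1)*(m+1+1) from by ring]


theorem stmt10 (k : ℕ) :
    ∑ n ∈ Finset.range (k + 1),
        (-1 : RatFunc ℚ) ^ n * (vv ^ (n * (n + 3) / 2))⁻¹ *
          (bkp ((k : ℤ) + n) (2 * n) / bfact n) =
      (vv ^ (2 * k * (k + 1)))⁻¹ := main k
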